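/- arXiv:2002.05891 — 5 statements merged into one kernel-verified Lean document; each statement's English description precedes it below -/
import Mathlib

section
/- Let V be a vector space over a field, let X ⊆ V be a set such that every subset of X of cardinality at most d+1 is linearly independent, and let q ∈ V be a nonzero vector of X-rank r, i.e., r is the minimal cardinality of a subset B ⊆ X with q ∈ span(B). Then for every integer t with r < t ≤ d+1−r, no subset A ⊆ X of cardinality t irredundantly spans q. -/
theorem stmt_4 {K V : Type*} [Field K] [AddCommGroup V] [Module K V]
    (d : ℕ) (hd : 0 < d) (X : Set V)
    (hX : ∀ S : Finset V, ↑S ⊆ X → S.card ≤ d + 1 →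
      LinearIndependent K (fun x : (S : Set V) => (x : V)))
    (q : V) (hq0 : q ≠ 0) (r : ℕ)
    (B : Finset V) (hBX : ↑B ⊆ X) (hBr : B.card = r)
    (hqB : q ∈ Submodule.span K (B : Set V))
    (hmin : ∀ C : Finset V, ↑C ⊆ X → q ∈ Submodule.span K (C : Set V) → r ≤ C.card)
    (t : ℕ) (hrt : r < t) (htd : t ≤ d + 1 - r)
    (A : Finset V) (hAX : ↑A ⊆ X) (hAt : A.card = t) :
    ¬ (q ∈ Submodule.span K (A : Set V) ∧
       ∀ A' : Finset V, A' ⊂ A → q ∉ Submodule.span K (A' : Set V)) := by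
  classical
  rintro ⟨hqA, hirr⟩
  -- A ∪ B is linearly independent
  have hUcard : (A ∪ B).card ≤ d + 1 := by
    have := Finset.card_union_le A B
    omega
  have hUX : ↑(A ∪ B) ⊆ X := by
    rw [Finset.coe_union]
    exact Set.union_subset hAX hBX
  have hU : LinearIndependent K (fun x : ((A ∪ B : Finset V) : Set V) => (x : V)) :=
    hX _ hUX hUcard
  replace hU := (linearIndepOn_iff (R := K) (v := id) (s := ((A ∪ B : Finset V) : Set V))).mp hU
  -- representations of q over A and over B
  obtain ⟨l₁, hl₁s, hl₁⟩ :=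
    (Finsupp.mem_span_image_iff_linearCombination K (v := id) (s := (A : Set V))).mp
      (by rwa [Set.image_id])
  obtain ⟨l₂, hl₂s, hl₂⟩ :=
    (Finsupp.mem_span_image_iff_linearCombination K (v := id) (s := (B : Set V))).mp
      (by rwa [Set.image_id])
  have hsub : l₁ - l₂ ∈ Finsupp.supported K K ((A ∪ B : Finset V) : Set V) := by
    rw [Finset.coe_union]
    exact Submodule.sub_mem _
      (Finsupp.supported_mono Set.subset_union_left hl₁s)
      (Finsupp.supported_mono Set.subset_union_right hl₂s)
  have hzero : (Finsupp.linearCombination K id) (l₁ - l₂) = 0 := by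
    rw [map_sub, hl₁, hl₂, sub_self]
  have hl12 : l₁ = l₂ := by
    have := hU _ hsub hzero
    exact sub_eq_zero.mp this
  -- hence l₁ is supported on A ∩ B
  have hl₁AB : l₁ ∈ Finsupp.supported K K ((A ∩ B : Finset V) : Set V) := by
    rw [Finset.coe_inter]
    intro x hx
    exact ⟨hl₁s hx, hl₂s (by rw [← hl12]; exact hx)⟩
  have hqAB : q ∈ Submodule.span K ((A ∩ B : Finset V) : Set V) := by
    rw [← Set.image_id ((A ∩ B : Finset V) : Set V)]
    exact (Finsupp.mem_span_image_iff_linearCombination K).mpr ⟨l₁, hl₁AB, hl₁⟩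
  -- A ∩ B is a proper subset of A
  have hss : A ∩ B ⊂ A := by
    refine Finset.ssubset_iff_subset_ne.mpr ⟨Finset.inter_subset_left, ?_⟩
    intro h
    have : (A ∩ B).card ≤ B.card := Finset.card_le_card Finset.inter_subset_right
    rw [h, hAt, hBr] at this
    omega
  exact hirr _ hss hqAB
end

section
/- Let K be a field and let q ∈ K^{d+1} be a nonzero vector whose rank r with respect to the moment curve X = {(1,t,…,t^d) : t ∈ K} satisfies r ≤ ⌊(d+1)/2⌋. Then for every integer t with r < t ≤ d+1−r there is no subset A ⊆ X of cardinality t that irredundantly spans q. -/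
open Submodule

lemma aux_pow_indep {K : Type*} [Field K] {d n : ℕ} (hn : n ≤ d + 1) {f : Fin n → K}
    (hf : Function.Injective f) :
    LinearIndependent K (fun i : Fin n => fun j : Fin (d + 1) => f i ^ (j : ℕ)) := by
  rw [Fintype.linearIndependent_iff]
  intro g hg
  have hz : g = 0 := by
    apply Matrix.eq_zero_of_forall_pow_sum_mul_pow_eq_zero hf
    intro i
    have := congrFun hg ⟨(i : ℕ), lt_of_lt_of_le i.2 hn⟩
    simpa using this
  intro i; rw [hz]; rfl

lemma aux_finset_indep {K : Type*} [Field K] {d : ℕ} {X : Set (Fin (d + 1) → K)}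
    (hX : X = {w | ∃ s : K, w = fun j : Fin (d + 1) => s ^ (j : ℕ)})
    (S : Finset (Fin (d + 1) → K)) (hS : ↑S ⊆ X) (hcard : S.card ≤ d + 1) :
    LinearIndependent K (fun x : (S : Set (Fin (d + 1) → K)) => (x : Fin (d + 1) → K)) := by
  subst hX
  set n := S.card with hn
  let e : Fin n ≃ ↥S := S.equivFin.symm
  have hchoice : ∀ i : Fin n, ∃ s : K, ((e i : Fin (d+1) → K)) = fun j : Fin (d+1) => s ^ (j:ℕ) :=
    fun i => hS (e i).2
  choose f hf using hchoice
  have hfe : ∀ i, (e i : Fin (d+1) → K) = fun j : Fin (d+1) => f i ^ (j:ℕ) := hf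
  have hfi : Function.Injective f := by
    intro i i' h
    have : (e i : Fin (d+1) → K) = (e i' : Fin (d+1) → K) := by rw [hfe, hfe, h]
    exact e.injective (Subtype.ext this)
  have hind : LinearIndependent K (fun i : Fin n => (e i : Fin (d+1) → K)) := by
    have := aux_pow_indep hcard hfi
    convert this using 1
    funext i; exact hfe i
  have hrange : Set.range (fun i : Fin n => (e i : Fin (d+1) → K)) = ↑S := by
    ext x
    constructor
    · rintro ⟨i, rfl⟩; exact (e i).2
    · intro hx; exact ⟨e.symm ⟨x, hx⟩, by simp⟩
  have := hind.linearIndepOn_id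
  rw [hrange] at this
  exact this

theorem stmt_6 {K : Type*} [Field K] (d : ℕ)
    (hcard : (d + 1 : Cardinal) ≤ Cardinal.mk K) :
    ∀ (X : Set (Fin (d + 1) → K)),
      X = {w | ∃ s : K, w = fun j : Fin (d + 1) => s ^ (j : ℕ)} →
      ∀ (q : Fin (d + 1) → K), q ≠ 0 →
      ∀ r : ℕ, r ≤ (d + 1) / 2 →
      (∃ B : Finset (Fin (d + 1) → K), ↑B ⊆ X ∧ B.card = r ∧
        q ∈ Submodule.span K (B : Set (Fin (d + 1) → K))) →
      (∀ C : Finset (Fin (d + 1) → K), ↑C ⊆ X →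
        q ∈ Submodule.span K (C : Set (Fin (d + 1) → K)) → r ≤ C.card) →
      ∀ t : ℕ, r < t → t ≤ d + 1 - r →
      ∀ A : Finset (Fin (d + 1) → K), ↑A ⊆ X → A.card = t →
      ¬ (q ∈ Submodule.span K (A : Set (Fin (d + 1) → K)) ∧
         ∀ A' : Finset (Fin (d + 1) → K), A' ⊂ A →
           q ∉ Submodule.span K (A' : Set (Fin (d + 1) → K))) := by
  intro X hX q hq r hr ⟨B, hBX, hBcard, hBspan⟩ _hmin t hrt htd A hAX hAcard
  rintro ⟨hAspan, hirr⟩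
  classical
  set S : Finset (Fin (d+1) → K) := B ∪ A with hSdef
  have hSX : ↑S ⊆ X := by
    rw [hSdef]; push_cast [Finset.coe_union]
    exact Set.union_subset hBX hAX
  have hScard : S.card ≤ d + 1 := by
    have h1 : S.card ≤ B.card + A.card := Finset.card_union_le _ _
    have h2 : r ≤ d + 1 := le_trans hr (Nat.div_le_self _ _)
    omega
  have hind := aux_finset_indep hX S hSX hScard
  -- disjointness of spans of B \ A and A
  have hdisj : Disjoint (span K ((B \ A : Finset _) : Set (Fin (d+1) → K)))
      (span K (A : Set (Fin (d+1) → K))) := by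
    have hBAsub : ((B \ A : Finset _) : Set (Fin (d+1) → K)) ⊆ (S : Set (Fin (d+1) → K)) := by
      intro x hx
      simp only [Finset.coe_sdiff, Set.mem_diff, Finset.mem_coe] at hx
      exact Finset.mem_coe.2 (Finset.mem_union_left _ hx.1)
    have hAsub : (A : Set (Fin (d+1) → K)) ⊆ (S : Set (Fin (d+1) → K)) := by
      intro x hx
      exact Finset.mem_coe.2 (Finset.mem_union_right _ (Finset.mem_coe.1 hx))
    have hp : Disjoint
        ((Subtype.val : ↥(S : Set (Fin (d+1) → K)) → (Fin (d+1) → K)) ⁻¹' ((B \ A : Finset _) : Set (Fin (d+1) → K)))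
        ((Subtype.val : ↥(S : Set (Fin (d+1) → K)) → (Fin (d+1) → K)) ⁻¹' (A : Set (Fin (d+1) → K))) := by
      refine Set.disjoint_left.2 ?_
      intro x hx1 hx2
      simp only [Set.mem_preimage, Finset.coe_sdiff, Set.mem_diff, Finset.mem_coe] at hx1 hx2
      exact hx1.2 hx2
    have h := hind.disjoint_span_image hp
    rwa [Subtype.image_preimage_coe, Subtype.image_preimage_coe,
      Set.inter_eq_self_of_subset_right hBAsub, Set.inter_eq_self_of_subset_right hAsub] at h
  -- q ∈ span (B ∩ A)
  have hsplit : q ∈ span K (((B \ A) : Finset _) : Set (Fin (d+1) → K))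
      ⊔ span K (((B ∩ A) : Finset _) : Set (Fin (d+1) → K)) := by
    rw [← Submodule.span_union, ← Finset.coe_union, Finset.sdiff_union_inter]
    exact hBspan
  obtain ⟨q1, hq1, q2, hq2, hq12⟩ := Submodule.mem_sup.1 hsplit
  have hq2A : q2 ∈ span K (A : Set (Fin (d+1) → K)) := by
    refine Submodule.span_mono ?_ hq2
    intro x hx
    exact Finset.mem_coe.2 (Finset.mem_of_mem_inter_right (Finset.mem_coe.1 hx))
  have hq1A : q1 ∈ span K (A : Set (Fin (d+1) → K)) := by
    have : q1 = q - q2 := by rw [← hq12]; ring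
    rw [this]; exact Submodule.sub_mem _ hAspan hq2A
  have hq10 : q1 = 0 := by
    have := Submodule.disjoint_def.1 hdisj q1 hq1 hq1A
    exact this
  have hqBA : q ∈ span K (((B ∩ A) : Finset _) : Set (Fin (d+1) → K)) := by
    rw [← hq12, hq10, zero_add]; exact hq2
  -- B ∩ A ⊂ A
  have hss : B ∩ A ⊂ A := by
    refine Finset.ssubset_iff_subset_ne.2 ⟨Finset.inter_subset_right, ?_⟩
    intro h
    have : (B ∩ A).card ≤ r := hBcard ▸ Finset.card_le_card Finset.inter_subset_left
    rw [h, hAcard] at this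
    omega
  exact hirr _ hss hqBA
end

section
/- Let M be an m×n matrix over a field K of rank r ≥ 1, and suppose M = Σ_{i=1}^r u_i v_i^T. Then each u_i lies in the column space of M and each v_i lies in the row space of M. -/
open Matrix Submodule Module

lemma aux_col {K : Type*} [Field K] (m n r : ℕ)
    (M : Matrix (Fin m) (Fin n) K) (hrank : M.rank = r)
    (u : Fin r → Fin m → K) (v : Fin r → Fin n → K)
    (hM : M = ∑ i : Fin r, Matrix.vecMulVec (u i) (v i)) :
    ∀ i, u i ∈ Submodule.span K (Set.range M.transpose) := by
  have hsub : Submodule.span K (Set.range M.transpose) ≤ Submodule.span K (Set.range u) := by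
    rw [Submodule.span_le]
    rintro _ ⟨j, rfl⟩
    have hcol : M.transpose j = ∑ i : Fin r, v i j • u i := by
      subst hM
      funext k
      simp [Matrix.vecMulVec, Matrix.sum_apply, mul_comm]
    rw [hcol]
    exact Submodule.sum_mem _ fun i _ =>
      Submodule.smul_mem _ _ (Submodule.subset_span ⟨i, rfl⟩)
  have hfin : finrank K (Submodule.span K (Set.range M.transpose)) = r := by
    exact (Matrix.rank_eq_finrank_span_cols M).symm.trans hrank
  have hle : finrank K (Submodule.span K (Set.range u)) ≤ r := by
    simpa [Set.finrank] using finrank_range_le_card u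
  have : FiniteDimensional K (Submodule.span K (Set.range u)) :=
    FiniteDimensional.span_of_finite K (Set.finite_range u)
  have heq : Submodule.span K (Set.range M.transpose) = Submodule.span K (Set.range u) :=
    Submodule.eq_of_le_of_finrank_le hsub (by rw [hfin]; exact hle)
  intro i
  rw [heq]
  exact Submodule.subset_span ⟨i, rfl⟩

theorem stmt_8 {K : Type*} [Field K] (m n r : ℕ) (hr : 1 ≤ r)
    (M : Matrix (Fin m) (Fin n) K) (hrank : M.rank = r)
    (u : Fin r → Fin m → K) (v : Fin r → Fin n → K)
    (hM : M = ∑ i : Fin r, Matrix.vecMulVec (u i) (v i)) :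
    (∀ i, u i ∈ Submodule.span K (Set.range M.transpose)) ∧
    (∀ i, v i ∈ Submodule.span K (Set.range M)) := by
  refine ⟨aux_col m n r M hrank u v hM, ?_⟩
  have hT : M.transpose = ∑ i : Fin r, Matrix.vecMulVec (v i) (u i) := by
    rw [hM]
    ext k j
    simp [Matrix.transpose_sum, Matrix.sum_apply, Matrix.vecMulVec, mul_comm]
  have hrT : M.transpose.rank = r := by rw [Matrix.rank_transpose, hrank]
  have := aux_col n m r M.transpose hrT v u hT
  simpa using this
end

section
/- Let K be an infinite field, let H ⊊ K^n be a proper linear subspace, and let M ∈ K^{m×n} be a nonzero matrix of rank r all of whose rows lie in H. Then there exist r+1 rank-one matrices R_i = u_i v_i^T, i = 1,…,r+1, such that M ∈ span{R_1,…,R_{r+1}}, M is not in the span of any proper subset of {R_1,…,R_{r+1}}, and at least one v_i ∉ H. -/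
open Matrix Submodule Module

section Aux

variable {K : Type*} [Field K] {m n : ℕ}

theorem aux_vecMulVec_row (x : Fin m → K) (y : Fin n → K) (a : Fin m) :
    Matrix.vecMulVec x y a = x a • y := by
  funext j; simp [Matrix.vecMulVec_apply]

theorem aux_dual (H : Submodule K (Fin n → K)) (w : Fin n → K) (hw : w ∉ H) :
    ∃ f : (Fin n → K) →ₗ[K] K, (∀ x ∈ H, f x = 0) ∧ f w = 1 := by
  obtain ⟨f0, hf0H, hf0w⟩ :
      ∃ f0 : Module.Dual K (Fin n → K), f0 ∈ H.dualAnnihilator ∧ f0 w ≠ 0 := by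
    by_contra h
    push_neg at h
    exact hw ((Subspace.forall_mem_dualAnnihilator_apply_eq_zero_iff H w).1
      (fun φ hφ => h φ hφ))
  refine ⟨(f0 w)⁻¹ • f0, fun x hx => ?_, ?_⟩
  · simp [(Submodule.mem_dualAnnihilator f0).1 hf0H x hx]
  · simp [inv_mul_cancel₀ hf0w]

theorem aux_phi (f : (Fin n → K) →ₗ[K] K) :
    ∃ φ : Matrix (Fin m) (Fin n) K →ₗ[K] (Fin m → K), ∀ A a, φ A a = f (A a) := by
  refine ⟨{ toFun := fun A a => f (A a), map_add' := ?_, map_smul' := ?_ }, fun A a => rfl⟩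
  · intro A B; funext a; exact map_add f (A a) (B a)
  · intro t A; funext a; exact map_smul f t (A a)

end Aux

theorem stmt_12 {K : Type*} [Field K] [Infinite K] (m n : ℕ)
    (H : Submodule K (Fin n → K)) (hH : H ≠ ⊤)
    (M : Matrix (Fin m) (Fin n) K) (hM : M ≠ 0)
    (hrows : ∀ a : Fin m, M a ∈ H) (r : ℕ) (hr : M.rank = r) :
    ∃ (u : Fin (r + 1) → Fin m → K) (v : Fin (r + 1) → Fin n → K),
      Function.Injective (fun i => Matrix.vecMulVec (u i) (v i)) ∧
      (∀ i, Matrix.vecMulVec (u i) (v i) ≠ 0) ∧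
      M ∈ Submodule.span K (Set.range fun i => Matrix.vecMulVec (u i) (v i)) ∧
      (∀ S : Set (Matrix (Fin m) (Fin n) K),
        S ⊂ Set.range (fun i => Matrix.vecMulVec (u i) (v i)) →
        M ∉ Submodule.span K S) ∧
      ∃ i, v i ∉ H := by
  classical
  obtain ⟨w, hw⟩ : ∃ w, w ∉ H := by
    by_contra h
    push_neg at h
    exact hH (Submodule.eq_top_iff'.2 h)
  obtain ⟨f, hfH, hfw⟩ := aux_dual H w hw
  obtain ⟨φ, hφ⟩ := aux_phi (m := m) f
  -- row space
  set W : Submodule K (Fin n → K) := Submodule.span K (Set.range M) with hWdef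
  have hrow : ∀ a : Fin m, M a ∈ W := fun a => Submodule.subset_span ⟨a, rfl⟩
  have hWH : W ≤ H := Submodule.span_le.2 (by rintro x ⟨a, rfl⟩; exact hrows a)
  have hfr : Module.finrank K W = r := by
    exact (Matrix.rank_eq_finrank_span_row M).symm.trans hr
  have hr1 : 0 < r := by
    rcases Nat.eq_zero_or_pos r with h0 | h
    · exfalso
      apply hM
      have hWbot : W = ⊥ := Submodule.finrank_eq_zero.1 (by rw [hfr, h0])
      funext a
      have := hrow a
      rw [hWbot, Submodule.mem_bot] at this
      exact this
    · exact h
  have b : Basis (Fin r) K W := Module.finBasisOfFinrankEq K W hfr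
  set u : Fin r → Fin m → K := fun i a => b.repr ⟨M a, hrow a⟩ i with hu_def
  set v : Fin r → Fin n → K := fun i => (b i : Fin n → K) with hv_def
  have hvH : ∀ i, v i ∈ H := fun i => hWH (b i).2
  have hMa : ∀ a, M a = ∑ i, u i a • v i := by
    intro a
    have h1 := congrArg (Subtype.val) (b.sum_repr ⟨M a, hrow a⟩)
    calc M a = ((⟨M a, hrow a⟩ : W) : Fin n → K) := rfl
      _ = ((∑ i, b.repr ⟨M a, hrow a⟩ i • b i : W) : Fin n → K) := h1.symm
      _ = ∑ i, u i a • v i := by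
          rw [hu_def, hv_def]
          push_cast
          rfl
  have hu_ind : ∀ c : Fin r → K, ∑ i, c i • u i = 0 → ∀ i, c i = 0 := by
    intro c hc i0
    have key : ∀ (x) (hx : x ∈ W), (∑ i, c i • b.coord i) ⟨x, hx⟩ = 0 := by
      intro x hx
      induction hx using Submodule.span_induction with
      | mem x h =>
        obtain ⟨a, rfl⟩ := h
        have h3 := congrFun hc a
        simpa [LinearMap.sum_apply, Basis.coord_apply, hu_def, mul_comm] using h3
      | zero => exact map_zero _
      | add x y hx hy ihx ihy =>
        have hxy : (⟨x + y, add_mem hx hy⟩ : W) = ⟨x, hx⟩ + ⟨y, hy⟩ := rfl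
        rw [hxy, map_add, ihx, ihy, add_zero]
      | smul t x hx ih =>
        have htx : (⟨t • x, smul_mem _ t hx⟩ : W) = t • (⟨x, hx⟩ : W) := rfl
        rw [htx, _root_.map_smul, ih, smul_zero]
    have h4 := key (b i0 : Fin n → K) (b i0).2
    have hb : (⟨(b i0 : Fin n → K), (b i0).2⟩ : W) = b i0 := rfl
    rw [hb] at h4
    simpa [LinearMap.sum_apply, Basis.coord_apply, Basis.repr_self,
      Finsupp.single_apply] using h4
  have hv_ind : ∀ c : Fin r → K, ∑ i, c i • v i = 0 → ∀ i, c i = 0 := by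
    intro c hc
    have h2 : W.subtype (∑ i, c i • b i) = W.subtype 0 := by
      rw [map_zero, map_sum]
      simpa [hv_def] using hc
    exact Fintype.linearIndependent_iff.1 b.linearIndependent c (W.injective_subtype h2)
  -- perturbed families
  set u' : Fin (r + 1) → Fin m → K := Fin.snoc u (∑ i, u i) with hu'
  set v' : Fin (r + 1) → Fin n → K := Fin.snoc (fun i => v i + w) w with hv'
  have hfv' : ∀ i, f (v' i) = 1 := by
    intro i
    refine Fin.lastCases ?_ ?_ i
    · simp [hv', hfw]
    · intro j
      simp [hv', map_add, hfH _ (hvH j), hfw]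
  have hv'_ne : ∀ i, v' i ≠ 0 := by
    intro i h
    have h1 := hfv' i
    rw [h, map_zero] at h1
    exact zero_ne_one h1
  have hφR : ∀ i, φ (Matrix.vecMulVec (u' i) (v' i)) = u' i := by
    intro i
    funext a
    rw [hφ, aux_vecMulVec_row, _root_.map_smul, hfv', smul_eq_mul, mul_one]
  have hφM : φ M = 0 := funext fun a => by rw [hφ]; exact hfH _ (hrows a)
  -- key: any representing combination has all coefficients nonzero
  have hkey : ∀ c : Fin (r + 1) → K,
      M = ∑ i, c i • Matrix.vecMulVec (u' i) (v' i) → ∀ j, c j ≠ 0 := by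
    intro c hc j hj
    have h0 : (0 : Fin m → K) = ∑ i, c i • u' i := by
      calc (0 : Fin m → K) = φ M := hφM.symm
        _ = ∑ i, c i • φ (Matrix.vecMulVec (u' i) (v' i)) := by
            rw [hc, map_sum]
            simp [_root_.map_smul]
        _ = ∑ i, c i • u' i := by simp [hφR]
    have h1 : ∑ i : Fin (r + 1), c i • u' i
        = ∑ i : Fin r, (c i.castSucc + c (Fin.last r)) • u i := by
      rw [Fin.sum_univ_castSucc]
      simp only [hu', Fin.snoc_castSucc, Fin.snoc_last, Finset.smul_sum, add_smul]
      rw [Finset.sum_add_distrib]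
    have h2 : ∀ i : Fin r, c i.castSucc + c (Fin.last r) = 0 :=
      hu_ind _ (by rw [← h1, ← h0])
    have hclast : c (Fin.last r) = 0 := by
      rcases Fin.eq_castSucc_or_eq_last j with ⟨j0, rfl⟩ | rfl
      · have := h2 j0
        rw [hj, zero_add] at this
        exact this
      · exact hj
    have hcall : ∀ i, c i = 0 := by
      intro i
      rcases Fin.eq_castSucc_or_eq_last i with ⟨i0, rfl⟩ | rfl
      · have := h2 i0
        rw [hclast, add_zero] at this
        exact this
      · exact hclast
    apply hM
    rw [hc]
    exact Finset.sum_eq_zero fun i _ => by rw [hcall i, zero_smul]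
  -- nonzero u's
  have hu_ne : ∀ i : Fin r, u i ≠ 0 := by
    intro i hi
    have h := hu_ind (fun k => if k = i then 1 else 0) ?_ i
    · simpa using h
    · rw [Finset.sum_eq_single i]
      · simp [hi]
      · intro k _ hk
        simp [hk]
      · intro h
        exact absurd (Finset.mem_univ i) h
  have hsum_ne : (∑ i, u i) ≠ 0 := by
    intro hs
    have h := hu_ind (fun _ => 1) (by simpa using hs) ⟨0, hr1⟩
    exact one_ne_zero h
  have hu'_ne : ∀ i, u' i ≠ 0 := by
    intro i
    refine Fin.lastCases ?_ ?_ i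
    · simpa [hu', Fin.snoc_last] using hsum_ne
    · intro j
      simpa [hu', Fin.snoc_castSucc] using hu_ne j
  -- R i ≠ 0
  have hR_ne : ∀ i, Matrix.vecMulVec (u' i) (v' i) ≠ 0 := by
    intro i h
    obtain ⟨a, ha⟩ := Function.ne_iff.1 (hu'_ne i)
    obtain ⟨bb, hb⟩ := Function.ne_iff.1 (hv'_ne i)
    have h2 := congrFun (congrFun h a) bb
    rw [Matrix.vecMulVec_apply] at h2
    exact mul_ne_zero ha hb (by simpa using h2)
  -- independence of v'
  have hv'_ind : ∀ c : Fin (r + 1) → K, ∑ i, c i • v' i = 0 → ∀ i, c i = 0 := by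
    intro c hc
    have hT : ∑ i, c i = 0 := by
      have h1 := congrArg f hc
      rw [map_sum, map_zero] at h1
      simpa [_root_.map_smul, hfv'] using h1
    have hsplit : ∑ i, c i • v' i
        = (∑ i : Fin r, c i.castSucc • v i) + (∑ i, c i) • w := by
      rw [Fin.sum_univ_castSucc, Fin.sum_univ_castSucc (f := fun i => c i)]
      simp only [hv', Fin.snoc_castSucc, Fin.snoc_last, smul_add, add_smul,
        Finset.sum_add_distrib, Finset.sum_smul]
      abel
    rw [hsplit, hT, zero_smul, add_zero] at hc
    have hcs : ∀ i : Fin r, c i.castSucc = 0 := hv_ind _ hc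
    have hclast : c (Fin.last r) = 0 := by
      rw [Fin.sum_univ_castSucc] at hT
      simpa [hcs] using hT
    intro i
    rcases Fin.eq_castSucc_or_eq_last i with ⟨i0, rfl⟩ | rfl
    · exact hcs i0
    · exact hclast
  -- injectivity
  have hRinj : Function.Injective (fun i => Matrix.vecMulVec (u' i) (v' i)) := by
    intro i j hij
    by_contra hne
    simp only at hij
    have hu'eq : u' i = u' j := by rw [← hφR i, ← hφR j, hij]
    obtain ⟨a, ha⟩ := Function.ne_iff.1 (hu'_ne i)
    have hrow2 : u' i a • v' i = u' i a • v' j := by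
      rw [← aux_vecMulVec_row (u' i) (v' i) a, hij, aux_vecMulVec_row, ← hu'eq]
    have hv'eq : v' i = v' j := smul_right_injective _ ha hrow2
    have hsum : ∑ k, ((if k = i then (1 : K) else 0) - (if k = j then 1 else 0)) • v' k
        = 0 := by
      simp only [sub_smul, ite_smul, zero_smul, Finset.sum_sub_distrib]
      simp only [Finset.sum_ite_eq', Finset.mem_univ, if_true]
      simp [hv'eq]
    have := hv'_ind _ hsum i
    simp [hne] at this
  -- M as a combination
  have hMsum : M = ∑ i, (Fin.snoc (fun _ => (1 : K)) (-1) : Fin (r + 1) → K) i •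
      Matrix.vecMulVec (u' i) (v' i) := by
    funext a j
    have hl : M a j = ∑ i, u i a * v i j := by
      have := congrFun (hMa a) j
      simpa [Finset.sum_apply] using this
    rw [hl]
    have hrr : (∑ i, (Fin.snoc (fun _ => (1 : K)) (-1) : Fin (r + 1) → K) i •
        Matrix.vecMulVec (u' i) (v' i)) a j
        = ∑ i : Fin (r + 1), (Fin.snoc (fun _ => (1 : K)) (-1) : Fin (r + 1) → K) i *
          (u' i a * v' i j) := by
      simp [Matrix.sum_apply, Matrix.vecMulVec_apply, Matrix.smul_apply, smul_eq_mul]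
    rw [hrr, Fin.sum_univ_castSucc]
    simp only [hu', hv', Fin.snoc_castSucc, Fin.snoc_last, Pi.add_apply, one_mul,
      neg_one_mul, Finset.sum_apply]
    rw [Finset.sum_mul]
    simp only [mul_add]
    rw [Finset.sum_add_distrib]
    ring
  -- assemble
  refine ⟨u', v', hRinj, hR_ne, ?_, ?_, ⟨Fin.last r, by simpa [hv', Fin.snoc_last] using hw⟩⟩
  · rw [mem_span_range_iff_exists_fun]
    exact ⟨_, hMsum.symm⟩
  · intro S hS hmem
    obtain ⟨x, hxR, hxS⟩ := Set.exists_of_ssubset hS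
    obtain ⟨j, rfl⟩ := hxR
    have hSsub : S ⊆ Set.range (fun i : {i : Fin (r + 1) // i ≠ j} =>
        Matrix.vecMulVec (u' i.1) (v' i.1)) := by
      intro y hy
      obtain ⟨k, rfl⟩ := hS.1 hy
      have hkj : k ≠ j := by
        intro h
        exact hxS (h ▸ hy)
      exact ⟨⟨k, hkj⟩, rfl⟩
    have hmem2 : M ∈ Submodule.span K (Set.range (fun i : {i : Fin (r + 1) // i ≠ j} =>
        Matrix.vecMulVec (u' i.1) (v' i.1))) :=
      Submodule.span_mono hSsub hmem
    rw [mem_span_range_iff_exists_fun] at hmem2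
    obtain ⟨c, hc⟩ := hmem2
    set c' : Fin (r + 1) → K := fun k => if h : k = j then 0 else c ⟨k, h⟩ with hc'def
    have hc'j : c' j = 0 := by simp [hc'def]
    have hstep : ∑ k ∈ Finset.univ.erase j, c' k • Matrix.vecMulVec (u' k) (v' k)
        = ∑ i : {i : Fin (r + 1) // i ≠ j}, c i • Matrix.vecMulVec (u' i.1) (v' i.1) := by
      rw [Finset.sum_subtype (Finset.univ.erase j)
        (p := fun k : Fin (r + 1) => k ≠ j) (by simp)
        (fun k => c' k • Matrix.vecMulVec (u' k) (v' k))]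
      refine Finset.sum_congr rfl ?_
      intro i _
      simp only [hc'def]
      rw [dif_neg i.2]
    have hMc' : M = ∑ k, c' k • Matrix.vecMulVec (u' k) (v' k) := by
      rw [← Finset.sum_erase Finset.univ (by rw [hc'j, zero_smul]), hstep, hc]
    exact hkey c' hMc' j hc'j
end

section
/- Let K be an infinite field, let V be a K-vector space of dimension a ≥ 1, let v ∈ V be nonzero, let m ≥ 1, and let o ∈ K^{m+1} be nonzero. Then there exists a set B of m+1 rank-one tensors in V ⊗ K^{m+1}, each of the form v ⊗ w_i, such that the w_i span K^{m+1}, v ⊗ o ∈ span(B), and v ⊗ o is not in the span of any proper subset of B. -/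
open TensorProduct

theorem stmt_15 {K V : Type*} [Field K] [Infinite K] [AddCommGroup V] [Module K V]
    (v : V) (hv : v ≠ 0) (m : ℕ) (hm : 1 ≤ m)
    (o : Fin (m + 1) → K) (ho : o ≠ 0) :
    ∃ w : Fin (m + 1) → (Fin (m + 1) → K),
      Submodule.span K (Set.range w) = ⊤ ∧
      Function.Injective (fun i => v ⊗ₜ[K] w i) ∧
      v ⊗ₜ[K] o ∈ Submodule.span K (Set.range fun i => v ⊗ₜ[K] w i) ∧
      ∀ B' : Set (V ⊗[K] (Fin (m + 1) → K)),
        B' ⊂ Set.range (fun i => v ⊗ₜ[K] w i) →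
        v ⊗ₜ[K] o ∉ Submodule.span K B' := by
  classical
  obtain ⟨j, hj⟩ : ∃ j, o j ≠ 0 := Function.ne_iff.mp ho
  -- standard basis
  set e : Fin (m + 1) → (Fin (m + 1) → K) := fun i => Pi.single i 1 with he
  set u : Fin (m + 1) → K := ∑ i ∈ Finset.univ.erase j, e i with hudef
  have hu : ∀ k, u k = if k = j then 0 else 1 := by
    intro k
    simp only [hudef, Finset.sum_apply, he, Pi.single_apply]
    rw [Finset.sum_ite_eq (Finset.univ.erase j) k fun _ => (1 : K)]
    simp
  set w : Fin (m + 1) → (Fin (m + 1) → K) :=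
    fun i => if i = j then (o j)⁻¹ • (o - u) else e i with hwdef
  set a : Fin (m + 1) → K := fun i => if i = j then o j else 1 with hadef
  have ha : ∀ i, a i ≠ 0 := by
    intro i
    simp only [hadef]
    split <;> simp [hj]
  have hoa : ∑ i, a i • w i = o := by
    rw [← Finset.add_sum_erase Finset.univ (fun i => a i • w i) (Finset.mem_univ j)]
    have h1 : a j • w j = o - u := by
      simp only [hadef, hwdef, if_pos rfl, smul_smul, mul_inv_cancel₀ hj, one_smul]
    have h2 : ∑ i ∈ Finset.univ.erase j, a i • w i = u := by
      rw [hudef]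
      refine Finset.sum_congr rfl fun i hi => ?_
      have hij : i ≠ j := (Finset.mem_erase.mp hi).1
      simp [hadef, hwdef, hij]
    rw [h1, h2, sub_add_cancel]
  -- evaluations of w
  have hwj : ∀ k, w j k = (o j)⁻¹ * (o k - u k) := by
    intro k; simp [hwdef]
  have hwi : ∀ i, i ≠ j → w i = e i := fun i hi => by simp [hwdef, hi]
  have hwjj : w j j = 1 := by
    rw [hwj, hu]; simp [inv_mul_cancel₀ hj]
  -- linear independence
  have hli : LinearIndependent K w := by
    rw [Fintype.linearIndependent_iff]
    intro g hg
    have hgj : g j = 0 := by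
      have h := congrFun hg j
      simp only [Finset.sum_apply, Pi.smul_apply, smul_eq_mul, Pi.zero_apply] at h
      rw [Finset.sum_eq_single j] at h
      · rwa [hwjj, mul_one] at h
      · intro i _ hij
        rw [hwi i hij, he]
        simp [Pi.single_apply, hij]
      · simp
    intro i
    rcases eq_or_ne i j with rfl | hij
    · exact hgj
    · have h := congrFun hg i
      simp only [Finset.sum_apply, Pi.smul_apply, smul_eq_mul, Pi.zero_apply] at h
      rw [Finset.sum_eq_single i] at h
      · rw [hwi i hij, he] at h
        simpa using h
      · intro i' _ hi'
        rcases eq_or_ne i' j with rfl | hi'j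
        · simp [hgj]
        · rw [hwi i' hi'j, he]
          simp [Pi.single_apply, hi']
      · simp
  have hspan : Submodule.span K (Set.range w) = ⊤ := by
    apply hli.span_eq_top_of_card_eq_finrank
    simp
  -- basis
  let b : Module.Basis (Fin (m + 1)) K (Fin (m + 1) → K) := Module.Basis.mk hli (le_of_eq hspan.symm)
  have hb : ∀ i, b i = w i := fun i => Module.Basis.mk_apply _ _ i
  -- the map x ↦ v ⊗ x is injective
  obtain ⟨φ, hφ⟩ := (LinearMap.toSpanSingleton K V v).exists_leftInverse_of_injective
    (LinearMap.ker_toSpanSingleton (R := K) (M := V) hv)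
  have hφv : φ v = 1 := by
    have := LinearMap.congr_fun hφ 1
    simpa [LinearMap.toSpanSingleton] using this
  let G : (Fin (m + 1) → K) →ₗ[K] V ⊗[K] (Fin (m + 1) → K) := TensorProduct.mk K V _ v
  have hG : ∀ x, G x = v ⊗ₜ[K] x := fun x => rfl
  let ψ : V ⊗[K] (Fin (m + 1) → K) →ₗ[K] (Fin (m + 1) → K) :=
    TensorProduct.lift ((LinearMap.lsmul K (Fin (m + 1) → K)).comp φ)
  have hψG : ∀ x, ψ (G x) = x := by
    intro x
    simp [ψ, G, hφv]
  have hGinj : Function.Injective G := Function.LeftInverse.injective hψG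
  have hwinj : Function.Injective w := hli.injective
  -- the representation of o in the basis b
  have hrepr : ∀ i, b.repr o i = a i := by
    intro i
    have ho' : o = ∑ i, a i • b i := by
      rw [← hoa]
      exact Finset.sum_congr rfl fun i _ => by rw [hb]
    rw [ho', b.repr_sum_self]
  refine ⟨w, hspan, ?_, ?_, ?_⟩
  · -- injectivity of i ↦ v ⊗ w i
    exact fun i i' h => hwinj (hGinj h)
  · -- membership
    have : v ⊗ₜ[K] o = ∑ i, a i • (v ⊗ₜ[K] w i) := by
      rw [← hoa, tmul_sum]
      exact Finset.sum_congr rfl fun i _ => by rw [tmul_smul]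
    rw [this]
    exact Submodule.sum_mem _ fun i _ =>
      Submodule.smul_mem _ _ (Submodule.subset_span ⟨i, rfl⟩)
  · -- irredundancy
    intro B' hB' hmem
    obtain ⟨x, hxr, hxB⟩ := Set.exists_of_ssubset hB'
    obtain ⟨j0, rfl⟩ := hxr
    have hB'sub : B' ⊆ (fun i => v ⊗ₜ[K] w i) '' {i | i ≠ j0} := by
      intro x hx
      obtain ⟨i, rfl⟩ := hB'.1 hx
      refine ⟨i, fun h => ?_, rfl⟩
      exact hxB (h ▸ hx)
    have h1 : v ⊗ₜ[K] o ∈ Submodule.span K ((fun i => v ⊗ₜ[K] w i) '' {i | i ≠ j0}) :=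
      Submodule.span_mono hB'sub hmem
    have himg : (fun i => v ⊗ₜ[K] w i) '' {i | i ≠ j0} = ⇑G '' (w '' {i | i ≠ j0}) := by
      rw [Set.image_image]
      rfl
    rw [himg, Submodule.span_image] at h1
    obtain ⟨y, hy, hyo⟩ := Submodule.mem_map.mp h1
    have hyo' : y = o := hGinj hyo
    subst hyo'
    have hwb : w '' {i | i ≠ j0} = ⇑b '' {i | i ≠ j0} := by
      apply Set.image_congr
      intro i _
      exact (hb i).symm
    rw [hwb] at hy
    have hsupp := (b.mem_span_image).mp hy
    have hj0 : b.repr y j0 ≠ 0 := by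
      rw [hrepr]
      exact ha j0
    exact absurd (hsupp (Finsupp.mem_support_iff.mpr hj0)) (by simp)
end
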